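/- Let w : Y × Y → ℝ satisfy w(y1,y2) > 0 for all y1, y2 ∈ Y. For a full-support probability vector π on Y define the implicit reward h_π(y) = β·log(π(y)/πref(y)) and the population DPO loss L(π) = Σ_{y1,y2∈Y} w(y1,y2)·[ σ(r(y1)−r(y2))·(−log σ(h_π(y1)−h_π(y2))) + σ(r(y2)−r(y1))·(−log σ(h_π(y2)−h_π(y1))) ], i.e., the expected cross-entropy loss over pairs labeled by the Bradley–Terry preference probabilities induced by r. Then L(π) ≥ L(π*) for every full-support probability vector π on Y, with equality if and only if π = π*; the Gibbs tilt π* is the unique minimizer of the population DPO loss. -/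

import Mathlib

open Real Finset

variable {Y : Type*} [Fintype Y] [Nonempty Y]

/-- The logistic sigmoid `σ(u) = 1 / (1 + exp (-u))`. -/
noncomputable def sigm (u : ℝ) : ℝ := 1 / (1 + Real.exp (-u))

/-- The partition constant `Z = ∑ y, πref y * exp (r y / β)`. -/
noncomputable def partZ (πref : Y → ℝ) (β : ℝ) (r : Y → ℝ) : ℝ :=
  ∑ y, πref y * Real.exp (r y / β)

/-- The Gibbs tilt `π*(y) = πref y * exp (r y / β) / Z`. -/
noncomputable def gibbs (πref : Y → ℝ) (β : ℝ) (r : Y → ℝ) (y : Y) : ℝ :=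
  πref y * Real.exp (r y / β) / partZ πref β r

/-- The implicit reward `h_π(y) = β * log (π y / πref y)`. -/
noncomputable def implicitReward (πref : Y → ℝ) (β : ℝ) (q : Y → ℝ) (y : Y) : ℝ :=
  β * Real.log (q y / πref y)

/-- The population DPO loss: expected cross-entropy over pairs labeled by the
Bradley–Terry preference probabilities induced by the reward `r`. -/
noncomputable def dpoLoss (πref : Y → ℝ) (β : ℝ) (r : Y → ℝ) (w : Y → Y → ℝ)
    (q : Y → ℝ) : ℝ :=
  ∑ y1, ∑ y2, w y1 y2 *
    (sigm (r y1 - r y2) *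
        (-Real.log (sigm (implicitReward πref β q y1 - implicitReward πref β q y2))) +
      sigm (r y2 - r y1) *
        (-Real.log (sigm (implicitReward πref β q y2 - implicitReward πref β q y1))))

/-- Pairwise term of the DPO loss. -/
noncomputable def pairTerm (πref : Y → ℝ) (β : ℝ) (r : Y → ℝ) (q : Y → ℝ)
    (y1 y2 : Y) : ℝ :=
  sigm (r y1 - r y2) *
      (-Real.log (sigm (implicitReward πref β q y1 - implicitReward πref β q y2))) +
    sigm (r y2 - r y1) *
      (-Real.log (sigm (implicitReward πref β q y2 - implicitReward πref β q y1)))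

lemma sigm_pos (u : ℝ) : 0 < sigm u := by
  unfold sigm; positivity

lemma sigm_lt_one (u : ℝ) : sigm u < 1 := by
  unfold sigm
  rw [div_lt_one (by positivity)]
  linarith [Real.exp_pos (-u)]

lemma sigm_neg_eq (u : ℝ) : sigm (-u) = 1 - sigm u := by
  unfold sigm
  rw [neg_neg, Real.exp_neg]
  have h : Real.exp u ≠ 0 := (Real.exp_pos u).ne'
  have h2 : (1 : ℝ) + Real.exp u ≠ 0 := by positivity
  have h3 : (1 : ℝ) + (Real.exp u)⁻¹ ≠ 0 := by positivity
  field_simp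
  ring

lemma sigm_inj : Function.Injective sigm := by
  intro a b hab
  unfold sigm at hab
  field_simp at hab
  first
  | exact hab
  | exact hab.symm
  | linarith
  | exact neg_injective (Real.exp_eq_exp.mp (by linarith))

/-- Binary cross-entropy / KL inequality with equality case. -/
lemma kl_key (p s : ℝ) (hp0 : 0 < p) (hp1 : p < 1) (hs0 : 0 < s) (hs1 : s < 1) :
    p * (-Real.log p) + (1 - p) * (-Real.log (1 - p)) ≤
      p * (-Real.log s) + (1 - p) * (-Real.log (1 - s)) ∧
    (p * (-Real.log s) + (1 - p) * (-Real.log (1 - s)) =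
      p * (-Real.log p) + (1 - p) * (-Real.log (1 - p)) ↔ s = p) := by
  have hp1' : (0:ℝ) < 1 - p := by linarith
  have hs1' : (0:ℝ) < 1 - s := by linarith
  have h1 : Real.log (s / p) ≤ s / p - 1 := Real.log_le_sub_one_of_pos (by positivity)
  have h2 : Real.log ((1 - s) / (1 - p)) ≤ (1 - s) / (1 - p) - 1 :=
    Real.log_le_sub_one_of_pos (by positivity)
  rw [Real.log_div hs0.ne' hp0.ne'] at h1
  rw [Real.log_div hs1'.ne' hp1'.ne'] at h2
  have e1 : p * (s / p - 1) = s - p := by field_simp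
  have e2 : (1 - p) * ((1 - s) / (1 - p) - 1) = p - s := by
    field_simp [hp1'.ne']
    ring
  have h1' : p * (Real.log s - Real.log p) ≤ s - p := by
    calc p * (Real.log s - Real.log p) ≤ p * (s / p - 1) :=
          mul_le_mul_of_nonneg_left h1 hp0.le
      _ = s - p := e1
  have h2' : (1 - p) * (Real.log (1 - s) - Real.log (1 - p)) ≤ p - s := by
    calc (1 - p) * (Real.log (1 - s) - Real.log (1 - p)) ≤
          (1 - p) * ((1 - s) / (1 - p) - 1) := mul_le_mul_of_nonneg_left h2 hp1'.le
      _ = p - s := e2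
  constructor
  · nlinarith [h1', h2']
  · constructor
    · intro heq
      by_contra hne
      have hne' : s / p ≠ 1 := by
        intro hc
        apply hne
        field_simp at hc
        linarith
      have h1s : Real.log (s / p) < s / p - 1 :=
        Real.log_lt_sub_one_of_pos (by positivity) hne'
      rw [Real.log_div hs0.ne' hp0.ne'] at h1s
      have h1'' : p * (Real.log s - Real.log p) < s - p := by
        calc p * (Real.log s - Real.log p) < p * (s / p - 1) :=
              (mul_lt_mul_iff_right₀ hp0).mpr h1s
          _ = s - p := e1
      nlinarith [h1'', h2']
    · intro heq; rw [heq]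

lemma partZ_pos (πref : Y → ℝ) (hrefpos : ∀ y, 0 < πref y) (β : ℝ) (r : Y → ℝ) :
    0 < partZ πref β r :=
  Finset.sum_pos (fun y _ => mul_pos (hrefpos y) (Real.exp_pos _)) Finset.univ_nonempty

lemma implicitReward_gibbs (πref : Y → ℝ) (hrefpos : ∀ y, 0 < πref y)
    (β : ℝ) (hβ : 0 < β) (r : Y → ℝ) (y : Y) :
    implicitReward πref β (gibbs πref β r) y = r y - β * Real.log (partZ πref β r) := by
  have hZ := partZ_pos πref hrefpos β r
  have hp := hrefpos y
  unfold implicitReward gibbs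
  have : πref y * Real.exp (r y / β) / partZ πref β r / πref y =
      Real.exp (r y / β) / partZ πref β r := by
    field_simp
  rw [this, Real.log_div (Real.exp_pos _).ne' hZ.ne', Real.log_exp]
  field_simp

theorem dpoLoss_ge_gibbs
    (πref : Y → ℝ) (hrefpos : ∀ y, 0 < πref y) (hrefsum : ∑ y, πref y = 1)
    (β : ℝ) (hβ : 0 < β) (r : Y → ℝ)
    (w : Y → Y → ℝ) (hw : ∀ y1 y2, 0 < w y1 y2)
    (q : Y → ℝ) (hqpos : ∀ y, 0 < q y) (hqsum : ∑ y, q y = 1) :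
    dpoLoss πref β r w q ≥ dpoLoss πref β r w (gibbs πref β r) ∧
    (dpoLoss πref β r w q = dpoLoss πref β r w (gibbs πref β r) ↔
      q = gibbs πref β r) := by
  have hZ := partZ_pos πref hrefpos β r
  set g := gibbs πref β r with hg
  -- per-pair analysis
  have hgdiff : ∀ y1 y2 : Y,
      implicitReward πref β g y1 - implicitReward πref β g y2 = r y1 - r y2 := by
    intro y1 y2
    rw [implicitReward_gibbs πref hrefpos β hβ r,
        implicitReward_gibbs πref hrefpos β hβ r]
    ring
  have hpair : ∀ y1 y2 : Y,
      pairTerm πref β r g y1 y2 ≤ pairTerm πref β r q y1 y2 ∧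
      (pairTerm πref β r q y1 y2 = pairTerm πref β r g y1 y2 ↔
        implicitReward πref β q y1 - implicitReward πref β q y2 = r y1 - r y2) := by
    intro y1 y2
    set p := sigm (r y1 - r y2) with hp
    set s := sigm (implicitReward πref β q y1 - implicitReward πref β q y2) with hs
    have hr21 : r y2 - r y1 = -(r y1 - r y2) := by ring
    have hh21 : implicitReward πref β q y2 - implicitReward πref β q y1 =
        -(implicitReward πref β q y1 - implicitReward πref β q y2) := by ring
    have hTq : pairTerm πref β r q y1 y2 =
        p * (-Real.log s) + (1 - p) * (-Real.log (1 - s)) := by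
      unfold pairTerm
      rw [hr21, hh21, sigm_neg_eq, sigm_neg_eq, ← hp, ← hs]
    have hTg : pairTerm πref β r g y1 y2 =
        p * (-Real.log p) + (1 - p) * (-Real.log (1 - p)) := by
      unfold pairTerm
      rw [hgdiff y1 y2, hgdiff y2 y1, hr21, sigm_neg_eq, hp]
    have key := kl_key p s (sigm_pos _) (sigm_lt_one _) (sigm_pos _) (sigm_lt_one _)
    rw [hTq, hTg]
    refine ⟨key.1, key.2.trans ?_⟩
    constructor
    · intro hsp
      rw [hs, hp] at hsp
      exact sigm_inj hsp
    · intro hd; rw [hs, hp, hd]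
  -- sum decomposition
  have hnonneg : ∀ y1 y2 : Y,
      0 ≤ w y1 y2 * (pairTerm πref β r q y1 y2 - pairTerm πref β r g y1 y2) := by
    intro y1 y2
    have := (hpair y1 y2).1
    have := (hw y1 y2).le
    nlinarith [(hpair y1 y2).1, (hw y1 y2).le]
  have hsum : dpoLoss πref β r w q - dpoLoss πref β r w g =
      ∑ y1, ∑ y2, w y1 y2 * (pairTerm πref β r q y1 y2 - pairTerm πref β r g y1 y2) := by
    unfold dpoLoss pairTerm
    rw [← Finset.sum_sub_distrib]
    refine Finset.sum_congr rfl fun y1 _ => ?_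
    rw [← Finset.sum_sub_distrib]
    refine Finset.sum_congr rfl fun y2 _ => ?_
    ring
  have hsumnonneg : 0 ≤ ∑ y1, ∑ y2,
      w y1 y2 * (pairTerm πref β r q y1 y2 - pairTerm πref β r g y1 y2) :=
    Finset.sum_nonneg fun y1 _ => Finset.sum_nonneg fun y2 _ => hnonneg y1 y2
  constructor
  · linarith [hsum, hsumnonneg]
  constructor
  · -- equality implies q = g
    intro heq
    have hz : ∑ y1, ∑ y2,
        w y1 y2 * (pairTerm πref β r q y1 y2 - pairTerm πref β r g y1 y2) = 0 := by
      rw [← hsum]; linarith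
    have hall : ∀ y1 y2 : Y,
        w y1 y2 * (pairTerm πref β r q y1 y2 - pairTerm πref β r g y1 y2) = 0 := by
      intro y1 y2
      have h1 := (Finset.sum_eq_zero_iff_of_nonneg
        (fun y1 _ => Finset.sum_nonneg fun y2 _ => hnonneg y1 y2)).mp hz y1 (mem_univ _)
      exact (Finset.sum_eq_zero_iff_of_nonneg
        (fun y2 _ => hnonneg y1 y2)).mp h1 y2 (mem_univ _)
    have hdiff : ∀ y1 y2 : Y,
        implicitReward πref β q y1 - implicitReward πref β q y2 = r y1 - r y2 := by
      intro y1 y2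
      have := hall y1 y2
      have hTeq : pairTerm πref β r q y1 y2 = pairTerm πref β r g y1 y2 := by
        have hwne := (hw y1 y2).ne'
        have := mul_eq_zero.mp this
        rcases this with h | h
        · exact absurd h hwne
        · linarith
      exact (hpair y1 y2).2.mp hTeq
    -- reconstruct q from the reward differences
    funext y
    obtain ⟨y0⟩ := (inferInstance : Nonempty Y)
    have hq0 := hqpos y0
    have hr0 := hrefpos y0
    have key : ∀ z : Y, q z = (q y0 / (πref y0 * Real.exp (r y0 / β))) *
        (πref z * Real.exp (r z / β)) := by
      intro z
      have hd := hdiff z y0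
      unfold implicitReward at hd
      have hlog : Real.log (q z / πref z) =
          Real.log (q y0 / πref y0) + (r z - r y0) / β := by
        field_simp [hβ.ne'] at hd ⊢
        linarith
      have hpos1 : (0:ℝ) < q z / πref z := div_pos (hqpos z) (hrefpos z)
      have hpos2 : (0:ℝ) < q y0 / πref y0 := div_pos (hqpos y0) (hrefpos y0)
      have := congrArg Real.exp hlog
      rw [Real.exp_log hpos1, Real.exp_add, Real.exp_log hpos2] at this
      have hrz := (hrefpos z).ne'
      have hexp : Real.exp ((r z - r y0) / β) =
          Real.exp (r z / β) / Real.exp (r y0 / β) := by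
        rw [← Real.exp_sub]; ring_nf
      rw [hexp] at this
      have he0 := (Real.exp_pos (r y0 / β)).ne'
      have hez := (Real.exp_pos (r z / β)).ne'
      field_simp at this ⊢
      first
      | linarith [this]
      | nlinarith [this]
      | linear_combination this
    have hcsum : (q y0 / (πref y0 * Real.exp (r y0 / β))) * partZ πref β r = 1 := by
      rw [partZ, Finset.mul_sum]
      rw [← hqsum]
      exact Finset.sum_congr rfl fun z _ => (key z).symm
    have hc : q y0 / (πref y0 * Real.exp (r y0 / β)) = 1 / partZ πref β r := by
      rw [div_eq_div_iff (by positivity) hZ.ne']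
      field_simp at hcsum ⊢
      linarith
    rw [hg]
    unfold gibbs
    rw [key y, hc]
    field_simp
  · intro heq; rw [heq]
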